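/- For every integer K ≥ 2 and every measurable function r : X → (0,∞) for which the integral defining D_InfoNCE(r) exists, one has D_InfoNCE(r) ≤ log K and D_InfoNCE(r) ≤ KL(q1 ‖ q0); that is, D_InfoNCE(r) ≤ min(log K, KL(q1 ‖ q0)). -/

import Mathlib

open MeasureTheory
open scoped ENNReal Classical

/-- The class measure on `X^K` under which the `z`-th coordinate has law `q1` and the
remaining coordinates are i.i.d. with law `q0`, all independent. -/
noncomputable def classMeasure {X : Type*} [MeasurableSpace X]
    (q1 q0 : Measure X) (K : ℕ) (z : Fin K) : Measure (Fin K → X) :=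
  Measure.pi fun i => if i = z then q1 else q0

/-- Kullback--Leibler divergence, valued in the extended reals: it equals the integral of the
log-likelihood ratio when `μ ≪ ν` and the log-likelihood ratio is integrable, and `⊤` otherwise. -/
noncomputable def klDivE {X : Type*} [MeasurableSpace X] (μ ν : Measure X) : EReal :=
  if μ ≪ ν ∧ Integrable (llr μ ν) μ then ((∫ x, llr μ ν x ∂μ : ℝ) : EReal) else ⊤

section Aux

open Real

variable {X : Type*} [MeasurableSpace X]

/-- Permutation invariance of an i.i.d. product measure. -/
lemma map_comp_perm_pi (q0 : Measure X) [SigmaFinite q0] {K : ℕ} (σ : Equiv.Perm (Fin K)) :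
    (Measure.pi fun _ : Fin K => q0).map (fun x => x ∘ σ) = Measure.pi fun _ : Fin K => q0 := by
  have hg : Measurable (fun x : Fin K → X => x ∘ σ) :=
    measurable_pi_iff.2 fun i => measurable_pi_apply (σ i)
  refine (Measure.pi_eq fun s hs => ?_).symm
  rw [Measure.map_apply hg (MeasurableSet.univ_pi hs)]
  have : (fun x : Fin K → X => x ∘ σ) ⁻¹' Set.pi Set.univ s
      = Set.pi Set.univ (fun i => s (σ.symm i)) := by
    ext x
    simp only [Set.mem_preimage, Set.mem_pi, Set.mem_univ, forall_true_left, Function.comp]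
    constructor
    · intro h i; simpa using h (σ.symm i)
    · intro h i; simpa using h (σ i)
  rw [this, Measure.pi_pi]
  exact σ.symm.prod_comp fun i => q0 (s i)

lemma lintegral_ratio_pi_eq_one (q0 : Measure X) [IsProbabilityMeasure q0]
    (K : ℕ) (hK : 0 < K) (r : X → ℝ) (hr : Measurable r) (hr_pos : ∀ x, 0 < r x) (j : Fin K) :
    ∫⁻ x : Fin K → X, ENNReal.ofReal (r (x j) / ((K : ℝ)⁻¹ * ∑ z, r (x z)))
      ∂(Measure.pi fun _ : Fin K => q0) = 1 := by
  have hmeas : ∀ j : Fin K, Measurable fun x : Fin K → X =>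
      ENNReal.ofReal (r (x j) / ((K : ℝ)⁻¹ * ∑ z, r (x z))) := by
    intro j
    apply ENNReal.measurable_ofReal.comp
    exact ((hr.comp (measurable_pi_apply j)).div
      (measurable_const.mul (Finset.measurable_sum _ fun z _ => hr.comp (measurable_pi_apply z))))
  haveI : Nonempty (Fin K) := ⟨⟨0, hK⟩⟩
  have hKpos : (0 : ℝ) < K := by exact_mod_cast hK
  have hSpos : ∀ x : Fin K → X, 0 < ∑ z, r (x z) := fun x =>
    Finset.sum_pos (fun z _ => hr_pos _) Finset.univ_nonempty
  -- all the integrals are equal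
  have hBeq : ∀ j : Fin K,
      (∫⁻ x : Fin K → X, ENNReal.ofReal (r (x j) / ((K : ℝ)⁻¹ * ∑ z, r (x z)))
        ∂(Measure.pi fun _ : Fin K => q0))
      = ∫⁻ x : Fin K → X, ENNReal.ofReal (r (x ⟨0, hK⟩) / ((K : ℝ)⁻¹ * ∑ z, r (x z)))
        ∂(Measure.pi fun _ : Fin K => q0) := by
    intro j
    set σ : Equiv.Perm (Fin K) := Equiv.swap j ⟨0, hK⟩ with hσdef
    have hgmeas : Measurable (fun x : Fin K → X => x ∘ σ) :=
      measurable_pi_iff.2 fun i => measurable_pi_apply (σ i)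
    have hinv := lintegral_map (μ := Measure.pi fun _ : Fin K => q0)
      (hmeas ⟨0, hK⟩) hgmeas
    rw [map_comp_perm_pi q0 σ] at hinv
    rw [hinv]
    refine lintegral_congr fun x => ?_
    show ENNReal.ofReal (r (x j) / ((K : ℝ)⁻¹ * ∑ z, r (x z)))
      = ENNReal.ofReal (r ((x ∘ σ) ⟨0, hK⟩) / ((K : ℝ)⁻¹ * ∑ z, r ((x ∘ σ) z)))
    have h1 : (x ∘ σ) ⟨0, hK⟩ = x j := by
      simp only [Function.comp, hσdef, Equiv.swap_apply_right]
    have h2 : (∑ z, r ((x ∘ σ) z)) = ∑ z, r (x z) :=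
      Equiv.sum_comp σ fun i => r (x i)
    rw [h1, h2]
  have hsum : (∑ _j : Fin K,
      ∫⁻ x : Fin K → X, ENNReal.ofReal (r (x ⟨0, hK⟩) / ((K : ℝ)⁻¹ * ∑ z, r (x z)))
        ∂(Measure.pi fun _ : Fin K => q0)) = (K : ℝ≥0∞) := by
    have : (∑ j : Fin K,
        ∫⁻ x : Fin K → X, ENNReal.ofReal (r (x j) / ((K : ℝ)⁻¹ * ∑ z, r (x z)))
          ∂(Measure.pi fun _ : Fin K => q0)) = (K : ℝ≥0∞) := by
      rw [← lintegral_finset_sum _ fun j _ => hmeas j]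
      have hpt : ∀ x : Fin K → X,
          (∑ j : Fin K, ENNReal.ofReal (r (x j) / ((K : ℝ)⁻¹ * ∑ z, r (x z))))
            = ENNReal.ofReal (K : ℝ) := by
        intro x
        rw [← ENNReal.ofReal_sum_of_nonneg (fun j _ =>
          div_nonneg (hr_pos _).le (mul_nonneg (inv_nonneg.2 hKpos.le) (hSpos x).le))]
        congr 1
        rw [← Finset.sum_div, div_eq_iff (ne_of_gt (mul_pos (inv_pos.2 hKpos) (hSpos x))),
          ← mul_assoc, mul_inv_cancel₀ (ne_of_gt hKpos), one_mul]
      simp only [hpt]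
      rw [lintegral_const, measure_univ, mul_one, ENNReal.ofReal_natCast]
    rw [← this]
    exact Finset.sum_congr rfl fun j _ => (hBeq j).symm
  rw [Finset.sum_const, Finset.card_univ, Fintype.card_fin, nsmul_eq_mul] at hsum
  have hK0 : (K : ℝ≥0∞) ≠ 0 := by exact_mod_cast hK.ne'
  rw [hBeq j]
  exact (ENNReal.mul_right_inj hK0 (ENNReal.natCast_ne_top K)).1 (by rw [mul_one, hsum])

lemma jensen_exp {α : Type*} [MeasurableSpace α] (μ : Measure α) [IsProbabilityMeasure μ]
    (ψ : α → ℝ) (hψ : Integrable ψ μ) (hexp : Integrable (fun a => Real.exp (ψ a)) μ) :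
    ∫ a, ψ a ∂μ ≤ Real.log (∫ a, Real.exp (ψ a) ∂μ) := by
  have h := convexOn_exp.map_integral_le continuous_exp.continuousOn isClosed_univ
    (Filter.Eventually.of_forall fun x => Set.mem_univ _) hψ (by exact hexp)
  calc ∫ a, ψ a ∂μ = Real.log (Real.exp (∫ a, ψ a ∂μ)) := (Real.log_exp _).symm
    _ ≤ Real.log (∫ a, Real.exp (ψ a) ∂μ) := Real.log_le_log (Real.exp_pos _) h


end Aux

/-- the InfoNCE objective is bounded by `min (log K) (KL(q1 ‖ q0))`. -/
theorem infoNCE_le_min_logK_klDiv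
    {X : Type*} [MeasurableSpace X] (q1 q0 : Measure X)
    [IsProbabilityMeasure q1] [IsProbabilityMeasure q0]
    (h_ac : q1 ≪ q0)
    (K : ℕ) (hK : 2 ≤ K)
    (r : X → ℝ) (hr_meas : Measurable r) (hr_pos : ∀ x, 0 < r x)
    (h_int : Integrable
      (fun x : Fin K → X =>
        Real.log (r (x ⟨0, by omega⟩) / ((K : ℝ)⁻¹ * ∑ z, r (x z))))
      (classMeasure q1 q0 K ⟨0, by omega⟩)) :
    ((∫ x : Fin K → X,
        Real.log (r (x ⟨0, by omega⟩) / ((K : ℝ)⁻¹ * ∑ z, r (x z)))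
        ∂(classMeasure q1 q0 K ⟨0, by omega⟩) : ℝ) : EReal)
      ≤ min ((Real.log K : ℝ) : EReal) (klDivE q1 q0) := by
  obtain ⟨n, rfl⟩ : ∃ n, K = n + 1 := ⟨K - 1, by omega⟩
  have hzero : (⟨0, by omega⟩ : Fin (n + 1)) = 0 := rfl
  simp only [hzero] at h_int ⊢
  set μs : Fin (n + 1) → Measure X := fun i => if i = (0 : Fin (n + 1)) then q1 else q0 with hμs
  set P : Measure (Fin (n + 1) → X) := classMeasure q1 q0 (n + 1) 0 with hPdef
  have hP : P = Measure.pi μs := rfl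
  haveI hprob : ∀ i, IsProbabilityMeasure (μs i) := by
    intro i
    rw [hμs]
    dsimp only
    split <;> infer_instance
  haveI : IsProbabilityMeasure P := by rw [hP]; infer_instance
  set f : (Fin (n + 1) → X) → ℝ := fun x => r (x 0) / (((n + 1 : ℕ) : ℝ)⁻¹ * ∑ z, r (x z))
    with hfdef
  have hKpos : (0 : ℝ) < ((n + 1 : ℕ) : ℝ) := by positivity
  have hSpos : ∀ x : Fin (n + 1) → X, 0 < ∑ z, r (x z) := fun x =>
    Finset.sum_pos (fun z _ => hr_pos _) Finset.univ_nonempty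
  have hfpos : ∀ x, 0 < f x := fun x =>
    div_pos (hr_pos _) (mul_pos (inv_pos.2 hKpos) (hSpos x))
  have hf_meas : Measurable f :=
    ((hr_meas.comp (measurable_pi_apply 0)).div
      (measurable_const.mul (Finset.measurable_sum _ fun z _ =>
        hr_meas.comp (measurable_pi_apply z))))
  have hfleK : ∀ x, f x ≤ ((n + 1 : ℕ) : ℝ) := by
    intro x
    rw [hfdef]
    dsimp only
    rw [div_le_iff₀ (mul_pos (inv_pos.2 hKpos) (hSpos x)), ← mul_assoc,
      mul_inv_cancel₀ (ne_of_gt hKpos), one_mul]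
    exact Finset.single_le_sum (fun z _ => (hr_pos (x z)).le) (Finset.mem_univ 0)
  -- Part 1 : bound by log K
  have h1 : ∫ x, Real.log (f x) ∂P ≤ Real.log ((n + 1 : ℕ) : ℝ) := by
    have h2 := integral_mono h_int (integrable_const (Real.log ((n + 1 : ℕ) : ℝ)))
      (fun x => Real.log_le_log (hfpos x) (hfleK x))
    rwa [integral_const, probReal_univ, smul_eq_mul, one_mul] at h2
  rw [le_min_iff]
  refine ⟨EReal.coe_le_coe_iff.2 h1, ?_⟩
  by_cases hInt : Integrable (llr q1 q0) q1
  swap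
  · rw [klDivE, if_neg (fun h => hInt h.2)]
    exact le_top
  rw [klDivE, if_pos ⟨h_ac, hInt⟩]
  refine EReal.coe_le_coe_iff.2 ?_
  -- Part 2 : bound by KL
  have heval : Measurable fun x : Fin (n + 1) → X => x 0 := measurable_pi_apply 0
  have hmap : P.map (fun x => x 0) = q1 := by
    rw [hP]
    ext s hs
    rw [Measure.map_apply heval hs]
    have hpre : (fun x : Fin (n + 1) → X => x 0) ⁻¹' s
        = Set.pi Set.univ (Function.update (fun _ : Fin (n + 1) => (Set.univ : Set X)) 0 s) := by
      ext x
      simp only [Set.mem_preimage, Set.mem_univ_pi, Function.update_apply]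
      constructor
      · intro h i
        by_cases h' : i = 0
        · simpa [h'] using h
        · simp [h']
      · intro h
        simpa using h 0
    rw [hpre, Measure.pi_pi]
    rw [Finset.prod_eq_single (0 : Fin (n + 1))
      (fun b _ hb => by
        rw [Function.update_of_ne hb]
        exact measure_univ)
      (fun h => absurd (Finset.mem_univ _) h)]
    rw [Function.update_self]
    simp [hμs]
  have hφ_int : Integrable (fun x : Fin (n + 1) → X => llr q1 q0 (x 0)) P := by
    refine (integrable_map_measure (stronglyMeasurable_llr _ _).aestronglyMeasurable
      heval.aemeasurable).1 ?_
    rw [hmap]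
    exact hInt
  have hφ_eq : ∫ x, llr q1 q0 (x 0) ∂P = ∫ a, llr q1 q0 a ∂q1 := by
    rw [← integral_map heval.aemeasurable
      (stronglyMeasurable_llr _ _).aestronglyMeasurable, hmap]
  -- the auxiliary function g
  set g : (Fin (n + 1) → X) → ℝ := fun x => f x * Real.exp (-llr q1 q0 (x 0)) with hgdef
  have hg_nonneg : ∀ x, 0 ≤ g x := fun x =>
    mul_nonneg (hfpos x).le (Real.exp_pos _).le
  have hg_meas : Measurable g :=
    hf_meas.mul (Real.measurable_exp.comp ((measurable_llr q1 q0).comp heval).neg)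
  -- the key lintegral bound
  set ρ : X → ℝ≥0∞ := q1.rnDeriv q0 with hρdef
  have hρ_meas : Measurable ρ := Measure.measurable_rnDeriv q1 q0
  have hEball : ∀ᵐ a ∂q1,
      ENNReal.ofReal (Real.exp (-llr q1 q0 a)) ≤ (ρ a)⁻¹ := by
    filter_upwards [exp_neg_llr h_ac, Measure.inv_rnDeriv h_ac] with a ha1 ha2
    rw [ha1, ← ha2]
    exact ENNReal.ofReal_toReal_le
  -- product structure
  set R : Measure (Fin n → X) := Measure.pi fun _ : Fin n => q0 with hRdef
  set e : (Fin (n + 1) → X) ≃ᵐ X × (Fin n → X) :=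
    MeasurableEquiv.piFinSuccAbove (fun _ : Fin (n + 1) => X) 0 with hedef
  have he1 : ∀ x : Fin (n + 1) → X, (e x).1 = x 0 := fun x => rfl
  have hmp : MeasurePreserving e P (q1.prod R) := by
    have h2 : (fun j : Fin n => μs ((0 : Fin (n + 1)).succAbove j)) = fun _ : Fin n => q0 := by
      funext j
      show (if (0 : Fin (n + 1)).succAbove j = 0 then q1 else q0) = q0
      have hne : (0 : Fin (n + 1)).succAbove j ≠ 0 := by
        rw [Fin.succAbove_zero]
        exact Fin.succ_ne_zero j
      rw [if_neg hne]
    have h := measurePreserving_piFinSuccAbove μs 0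
    rw [h2] at h
    have h1 : μs 0 = q1 := if_pos rfl
    rw [h1] at h
    exact hP ▸ h
  have hmpQ : MeasurePreserving e (Measure.pi fun _ : Fin (n + 1) => q0) (q0.prod R) := by
    have h := measurePreserving_piFinSuccAbove (fun _ : Fin (n + 1) => q0) 0
    exact h
  -- F' on the product space
  set F' : X × (Fin n → X) → ℝ≥0∞ := fun y => ENNReal.ofReal (f (e.symm y)) with hF'def
  have hF'_meas : Measurable F' :=
    ENNReal.measurable_ofReal.comp (hf_meas.comp e.symm.measurable)
  have hF'e : ∀ x, F' (e x) = ENNReal.ofReal (f x) := by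
    intro x
    rw [hF'def]
    simp
  have hmul_meas : Measurable fun y : X × (Fin n → X) => F' y * (ρ y.1)⁻¹ :=
    hF'_meas.mul ((hρ_meas.comp measurable_fst).inv)
  -- key bound : lintegral of ofReal ∘ g is at most 1
  have hA : ∫⁻ x, ENNReal.ofReal (g x) ∂P ≤ 1 := by
    have hae : ∀ᵐ x ∂P,
        ENNReal.ofReal (g x) ≤ ENNReal.ofReal (f x) * (ρ (x 0))⁻¹ := by
      rw [hP]
      have hball : ∀ᵐ a ∂(μs 0), ENNReal.ofReal (Real.exp (-llr q1 q0 a)) ≤ (ρ a)⁻¹ := by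
        have h1 : μs 0 = q1 := if_pos rfl
        rw [h1]; exact hEball
      filter_upwards [Measure.tendsto_eval_ae_ae.eventually hball] with x hx
      rw [hgdef]
      dsimp only
      rw [ENNReal.ofReal_mul (hfpos x).le]
      exact mul_le_mul_right hx _
    calc ∫⁻ x, ENNReal.ofReal (g x) ∂P
        ≤ ∫⁻ x, ENNReal.ofReal (f x) * (ρ (x 0))⁻¹ ∂P := lintegral_mono_ae hae
      _ = ∫⁻ y, F' y * (ρ y.1)⁻¹ ∂(q1.prod R) := by
          rw [← hmp.map_eq, lintegral_map hmul_meas e.measurable]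
          refine lintegral_congr fun x => ?_
          rw [hF'e x, he1 x]
      _ = ∫⁻ a, (∫⁻ y, F' (a, y) ∂ R) * (ρ a)⁻¹ ∂q1 := by
          rw [lintegral_prod _ hmul_meas.aemeasurable]
          refine lintegral_congr fun a => ?_
          have hFa : Measurable fun y : Fin n → X => F' (a, y) :=
            hF'_meas.comp measurable_prodMk_left
          calc ∫⁻ y, F' (a, y) * (ρ (a, y).1)⁻¹ ∂ R
              = ∫⁻ y, F' (a, y) * (ρ a)⁻¹ ∂ R := lintegral_congr fun y => rfl
            _ = (∫⁻ y, F' (a, y) ∂ R) * (ρ a)⁻¹ := lintegral_mul_const _ hFa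
      _ = ∫⁻ a, ρ a * ((∫⁻ y, F' (a, y) ∂ R) * (ρ a)⁻¹) ∂q0 := by
          conv_lhs => rw [← Measure.withDensity_rnDeriv_eq q1 q0 h_ac]
          refine (lintegral_withDensity_eq_lintegral_mul q0 hρ_meas
            ((hF'_meas.lintegral_prod_right' (ν := R)).mul hρ_meas.inv)).trans ?_
          exact lintegral_congr fun a => rfl
      _ ≤ ∫⁻ a, ∫⁻ y, F' (a, y) ∂ R ∂q0 := by
          refine lintegral_mono fun a => ?_
          calc ρ a * ((∫⁻ y, F' (a, y) ∂ R) * (ρ a)⁻¹)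
              = (∫⁻ y, F' (a, y) ∂ R) * (ρ a * (ρ a)⁻¹) := by ring
            _ ≤ (∫⁻ y, F' (a, y) ∂ R) * 1 := mul_le_mul_right (ENNReal.mul_inv_le_one _) _
            _ = _ := mul_one _
      _ = ∫⁻ y, F' y ∂(q0.prod R) := (lintegral_prod _ hF'_meas.aemeasurable).symm
      _ = ∫⁻ x, ENNReal.ofReal (f x) ∂(Measure.pi fun _ : Fin (n + 1) => q0) := by
          rw [← hmpQ.map_eq, lintegral_map hF'_meas e.measurable]
          exact lintegral_congr fun x => hF'e x
      _ = 1 := lintegral_ratio_pi_eq_one q0 (n + 1) (Nat.succ_pos n) r hr_meas hr_pos 0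
  -- integrability of g and the bound on its integral
  have hg_int : Integrable g P := by
    refine ⟨hg_meas.aestronglyMeasurable, ?_⟩
    rw [hasFiniteIntegral_iff_norm]
    refine lt_of_le_of_lt ?_ ENNReal.one_lt_top
    refine le_trans (le_of_eq (lintegral_congr fun x => ?_)) hA
    rw [Real.norm_of_nonneg (hg_nonneg x)]
  have hgle1 : ∫ x, g x ∂P ≤ 1 := by
    rw [integral_eq_lintegral_of_nonneg_ae (Filter.Eventually.of_forall hg_nonneg)
      hg_meas.aestronglyMeasurable]
    calc (∫⁻ x, ENNReal.ofReal (g x) ∂P).toReal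
        ≤ (1 : ℝ≥0∞).toReal := ENNReal.toReal_mono ENNReal.one_ne_top hA
      _ = 1 := ENNReal.toReal_one
  -- Jensen
  have hexpψ : (fun x => Real.exp (Real.log (f x) - llr q1 q0 (x 0))) = g := by
    funext x
    rw [Real.exp_sub, Real.exp_log (hfpos x), div_eq_mul_inv, ← Real.exp_neg]
  have hψ_int : Integrable (fun x => Real.log (f x) - llr q1 q0 (x 0)) P := h_int.sub hφ_int
  have hjen := jensen_exp P _ hψ_int (by rw [hexpψ]; exact hg_int)
  rw [hexpψ] at hjen
  have hlog : Real.log (∫ x, g x ∂P) ≤ 0 :=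
    Real.log_nonpos (integral_nonneg hg_nonneg) hgle1
  rw [integral_sub h_int hφ_int] at hjen
  have : ∫ x, Real.log (f x) ∂P ≤ ∫ x, llr q1 q0 (x 0) ∂P := by linarith
  calc ∫ x, Real.log (f x) ∂P ≤ ∫ x, llr q1 q0 (x 0) ∂P := this
    _ = ∫ a, llr q1 q0 a ∂q1 := hφ_eq
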